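/- Minimax equals maximin for log-loss expected regret: min over predictors Q of max over parameters (θ_s, θ_t) of the expected KL-regret equals max over priors ω(θ_s, θ_t) of the conditional mutual information I(Y'_t; Θ_s, Θ_t | D^m_s, D^{U,n}_t, X'_t), where the joint law is induced by the prior and the parametric model. -/

import Mathlib

open Finset Real

variable {Θs Θt S U X Y : Type*}
  [Fintype Θs] [Fintype Θt] [Fintype S] [Fintype U] [Fintype X] [Fintype Y]
  [Nonempty Θs] [Nonempty Θt] [Nonempty S] [Nonempty U] [Nonempty X] [Nonempty Y]

/-- The set of (strictly positive) conditional predictors. -/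
def Predictors (S U X Y : Type*) [Fintype Y] : Type _ :=
  {Q : S → U → X → Y → ℝ // ∀ s u x, (∀ y, 0 < Q s u x y) ∧ ∑ y, Q s u x y = 1}

/-- The set of priors over the parameter pair. -/
def Priors (Θs Θt : Type*) [Fintype Θs] [Fintype Θt] : Type _ :=
  {ω : Θs → Θt → ℝ // (∀ θs θt, 0 ≤ ω θs θt) ∧ ∑ θs, ∑ θt, ω θs θt = 1}

/-- Expected KL regret of predictor Q under parameters (θs, θt): the model draws
source data s ~ Ps θs, unlabeled target data u ~ Pt θt, test feature x ~ Px θt,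
and the true label distribution is Pyx θt x. -/
noncomputable def regret [Fintype S] [Fintype U] [Fintype X] [Fintype Y]
    (Ps : Θs → S → ℝ) (Pt : Θt → U → ℝ) (Px : Θt → X → ℝ)
    (Pyx : Θt → X → Y → ℝ) (Q : S → U → X → Y → ℝ) (θs : Θs) (θt : Θt) : ℝ :=
  ∑ s, ∑ u, ∑ x, Ps θs s * Pt θt u * Px θt x *
    ∑ y, Pyx θt x y * Real.log (Pyx θt x y / Q s u x y)

/-- The Bayes mixture predictor associated with a prior. -/
noncomputable def mixturePredictor [Fintype Θs] [Fintype Θt]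
    (Ps : Θs → S → ℝ) (Pt : Θt → U → ℝ) (Px : Θt → X → ℝ)
    (Pyx : Θt → X → Y → ℝ) (ω : Θs → Θt → ℝ) (s : S) (u : U) (x : X) (y : Y) : ℝ :=
  (∑ θs, ∑ θt, ω θs θt * Ps θs s * Pt θt u * Px θt x * Pyx θt x y) /
    (∑ θs, ∑ θt, ω θs θt * Ps θs s * Pt θt u * Px θt x)

/-- Conditional mutual information I(Y'; Θs, Θt | D_s, D_t, X') under the joint
law induced by the prior ω and the model: it equals the prior-averaged regret of
the Bayes mixture predictor. -/
noncomputable def condMutualInfo [Fintype Θs] [Fintype Θt] [Fintype S] [Fintype U]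
    [Fintype X] [Fintype Y]
    (Ps : Θs → S → ℝ) (Pt : Θt → U → ℝ) (Px : Θt → X → ℝ)
    (Pyx : Θt → X → Y → ℝ) (ω : Θs → Θt → ℝ) : ℝ :=
  ∑ θs, ∑ θt, ω θs θt *
    regret Ps Pt Px Pyx (mixturePredictor Ps Pt Px Pyx ω) θs θt

/-! ### Auxiliary lemmas -/

/-- Gibbs' inequality on a finite type. -/
lemma gibbs_ineq {Y : Type*} [Fintype Y] (p q : Y → ℝ) (hp : ∀ y, 0 < p y)
    (hq : ∀ y, 0 < q y) (hp1 : ∑ y, p y = 1) (hq1 : ∑ y, q y = 1) :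
    0 ≤ ∑ y, p y * Real.log (p y / q y) := by
  have key : ∀ y : Y, p y - q y ≤ p y * Real.log (p y / q y) := by
    intro y
    have h1 : Real.log (q y / p y) ≤ q y / p y - 1 :=
      Real.log_le_sub_one_of_pos (div_pos (hq y) (hp y))
    have h3 : p y * Real.log (q y / p y) ≤ q y - p y := by
      calc p y * Real.log (q y / p y) ≤ p y * (q y / p y - 1) :=
            mul_le_mul_of_nonneg_left h1 (hp y).le
        _ = q y - p y := by
            rw [mul_sub, mul_one, mul_comm (p y), div_mul_cancel₀ _ (hp y).ne']
    have h2 : Real.log (p y / q y) = - Real.log (q y / p y) := by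
      rw [← Real.log_inv, inv_div]
    rw [h2, mul_neg]
    linarith
  calc (0:ℝ) = ∑ y, (p y - q y) := by
        rw [Finset.sum_sub_distrib, hp1, hq1, sub_self]
    _ ≤ _ := Finset.sum_le_sum fun y _ => key y

lemma sum_swap24 {α β γ δ ε ζ : Type*} [Fintype α] [Fintype β] [Fintype γ]
    [Fintype δ] [Fintype ε] [Fintype ζ] (g : α → β → γ → δ → ε → ζ → ℝ) :
    ∑ a, ∑ b, ∑ c, ∑ d, ∑ e, ∑ f, g a b c d e f
      = ∑ c, ∑ d, ∑ e, ∑ f, ∑ a, ∑ b, g a b c d e f := by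
  have h := Finset.sum_comm (s := (univ : Finset (α × β)))
    (t := (univ : Finset (γ × δ × ε × ζ)))
    (f := fun p q => g p.1 p.2 q.1 q.2.1 q.2.2.1 q.2.2.2)
  simpa [Fintype.sum_prod_type] using h

set_option linter.unusedSectionVars false

lemma exists_pos_of_prior {Θs Θt : Type*} [Fintype Θs] [Fintype Θt] (ω : Θs → Θt → ℝ) (h0 : ∀ a b, 0 ≤ ω a b)
    (h1 : ∑ a, ∑ b, ω a b = 1) : ∃ a b, 0 < ω a b := by
  by_contra h
  push_neg at h
  have hz : ∑ a, ∑ b, ω a b = 0 :=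
    Finset.sum_eq_zero fun a _ => Finset.sum_eq_zero fun b _ =>
      le_antisymm (h a b) (h0 a b)
  rw [hz] at h1
  exact zero_ne_one h1

lemma mixDen_pos (Ps : Θs → S → ℝ) (Pt : Θt → U → ℝ) (Px : Θt → X → ℝ)
    (hPs : ∀ θs, (∀ s, 0 < Ps θs s) ∧ ∑ s, Ps θs s = 1)
    (hPt : ∀ θt, (∀ u, 0 < Pt θt u) ∧ ∑ u, Pt θt u = 1)
    (hPx : ∀ θt, (∀ x, 0 < Px θt x) ∧ ∑ x, Px θt x = 1)
    (ω : Θs → Θt → ℝ) (h0 : ∀ a b, 0 ≤ ω a b)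
    (h1 : ∑ a, ∑ b, ω a b = 1) (s : S) (u : U) (x : X) :
    0 < ∑ θs, ∑ θt, ω θs θt * Ps θs s * Pt θt u * Px θt x := by
  obtain ⟨a, b, hab⟩ := exists_pos_of_prior ω h0 h1
  have hterm : 0 < ω a b * Ps a s * Pt b u * Px b x :=
    mul_pos (mul_pos (mul_pos hab ((hPs a).1 s)) ((hPt b).1 u)) ((hPx b).1 x)
  have h2 : ω a b * Ps a s * Pt b u * Px b x
      ≤ ∑ θt, ω a θt * Ps a s * Pt θt u * Px θt x :=
    Finset.single_le_sum (f := fun θt => ω a θt * Ps a s * Pt θt u * Px θt x)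
      (fun i _ => mul_nonneg (mul_nonneg (mul_nonneg (h0 a i) ((hPs a).1 s).le)
        ((hPt i).1 u).le) ((hPx i).1 x).le) (mem_univ b)
  have h3 : ∑ θt, ω a θt * Ps a s * Pt θt u * Px θt x
      ≤ ∑ θs, ∑ θt, ω θs θt * Ps θs s * Pt θt u * Px θt x :=
    Finset.single_le_sum (f := fun θs => ∑ θt, ω θs θt * Ps θs s * Pt θt u * Px θt x)
      (fun j _ => Finset.sum_nonneg fun i _ =>
        mul_nonneg (mul_nonneg (mul_nonneg (h0 j i) ((hPs j).1 s).le)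
          ((hPt i).1 u).le) ((hPx i).1 x).le) (mem_univ a)
  linarith

lemma mixNum_pos (Ps : Θs → S → ℝ) (Pt : Θt → U → ℝ) (Px : Θt → X → ℝ) (Pyx : Θt → X → Y → ℝ)
    (hPs : ∀ θs, (∀ s, 0 < Ps θs s) ∧ ∑ s, Ps θs s = 1)
    (hPt : ∀ θt, (∀ u, 0 < Pt θt u) ∧ ∑ u, Pt θt u = 1)
    (hPx : ∀ θt, (∀ x, 0 < Px θt x) ∧ ∑ x, Px θt x = 1)
    (hPyx : ∀ θt x, (∀ y, 0 < Pyx θt x y) ∧ ∑ y, Pyx θt x y = 1)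
    (ω : Θs → Θt → ℝ) (h0 : ∀ a b, 0 ≤ ω a b)
    (h1 : ∑ a, ∑ b, ω a b = 1) (s : S) (u : U) (x : X) (y : Y) :
    0 < ∑ θs, ∑ θt, ω θs θt * Ps θs s * Pt θt u * Px θt x * Pyx θt x y := by
  obtain ⟨a, b, hab⟩ := exists_pos_of_prior ω h0 h1
  have hterm : 0 < ω a b * Ps a s * Pt b u * Px b x * Pyx b x y :=
    mul_pos (mul_pos (mul_pos (mul_pos hab ((hPs a).1 s)) ((hPt b).1 u))
      ((hPx b).1 x)) ((hPyx b x).1 y)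
  have h2 : ω a b * Ps a s * Pt b u * Px b x * Pyx b x y
      ≤ ∑ θt, ω a θt * Ps a s * Pt θt u * Px θt x * Pyx θt x y :=
    Finset.single_le_sum
      (f := fun θt => ω a θt * Ps a s * Pt θt u * Px θt x * Pyx θt x y)
      (fun i _ => mul_nonneg (mul_nonneg (mul_nonneg (mul_nonneg (h0 a i)
        ((hPs a).1 s).le) ((hPt i).1 u).le) ((hPx i).1 x).le)
        ((hPyx i x).1 y).le) (mem_univ b)
  have h3 : ∑ θt, ω a θt * Ps a s * Pt θt u * Px θt x * Pyx θt x y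
      ≤ ∑ θs, ∑ θt, ω θs θt * Ps θs s * Pt θt u * Px θt x * Pyx θt x y :=
    Finset.single_le_sum
      (f := fun θs => ∑ θt, ω θs θt * Ps θs s * Pt θt u * Px θt x * Pyx θt x y)
      (fun j _ => Finset.sum_nonneg fun i _ =>
        mul_nonneg (mul_nonneg (mul_nonneg (mul_nonneg (h0 j i)
          ((hPs j).1 s).le) ((hPt i).1 u).le) ((hPx i).1 x).le)
          ((hPyx i x).1 y).le) (mem_univ a)
  linarith

/-- The mixture predictor of a prior is a valid (strictly positive) predictor. -/
lemma mixture_isPredictor (Ps : Θs → S → ℝ) (Pt : Θt → U → ℝ) (Px : Θt → X → ℝ) (Pyx : Θt → X → Y → ℝ)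
    (hPs : ∀ θs, (∀ s, 0 < Ps θs s) ∧ ∑ s, Ps θs s = 1)
    (hPt : ∀ θt, (∀ u, 0 < Pt θt u) ∧ ∑ u, Pt θt u = 1)
    (hPx : ∀ θt, (∀ x, 0 < Px θt x) ∧ ∑ x, Px θt x = 1)
    (hPyx : ∀ θt x, (∀ y, 0 < Pyx θt x y) ∧ ∑ y, Pyx θt x y = 1)
    (ω : Θs → Θt → ℝ) (h0 : ∀ a b, 0 ≤ ω a b)
    (h1 : ∑ a, ∑ b, ω a b = 1) :
    ∀ s u x, (∀ y, 0 < mixturePredictor Ps Pt Px Pyx ω s u x y) ∧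
      ∑ y, mixturePredictor Ps Pt Px Pyx ω s u x y = 1 := by
  intro s u x
  have hden := mixDen_pos Ps Pt Px hPs hPt hPx ω h0 h1 s u x
  constructor
  · intro y
    exact div_pos (mixNum_pos Ps Pt Px Pyx hPs hPt hPx hPyx ω h0 h1 s u x y) hden
  · unfold mixturePredictor
    rw [← Finset.sum_div]
    rw [show (∑ y, ∑ θs, ∑ θt, ω θs θt * Ps θs s * Pt θt u * Px θt x * Pyx θt x y)
        = ∑ θs, ∑ θt, ω θs θt * Ps θs s * Pt θt u * Px θt x from ?_]
    · exact div_self hden.ne'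
    · rw [Finset.sum_comm]
      refine Finset.sum_congr rfl fun a _ => ?_
      rw [Finset.sum_comm]
      refine Finset.sum_congr rfl fun b _ => ?_
      rw [← Finset.mul_sum, (hPyx b x).2, mul_one]

/-- Regret is nonnegative against valid predictors. -/
lemma regret_nonneg (Ps : Θs → S → ℝ) (Pt : Θt → U → ℝ) (Px : Θt → X → ℝ) (Pyx : Θt → X → Y → ℝ)
    (hPs : ∀ θs, (∀ s, 0 < Ps θs s) ∧ ∑ s, Ps θs s = 1)
    (hPt : ∀ θt, (∀ u, 0 < Pt θt u) ∧ ∑ u, Pt θt u = 1)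
    (hPx : ∀ θt, (∀ x, 0 < Px θt x) ∧ ∑ x, Px θt x = 1)
    (hPyx : ∀ θt x, (∀ y, 0 < Pyx θt x y) ∧ ∑ y, Pyx θt x y = 1)
    (Q : S → U → X → Y → ℝ)
    (hQ : ∀ s u x, (∀ y, 0 < Q s u x y) ∧ ∑ y, Q s u x y = 1) (a : Θs) (b : Θt) :
    0 ≤ regret Ps Pt Px Pyx Q a b := by
  unfold regret
  refine Finset.sum_nonneg fun s _ => Finset.sum_nonneg fun u _ =>
    Finset.sum_nonneg fun x _ => mul_nonneg ?_ ?_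
  · exact mul_nonneg (mul_nonneg ((hPs a).1 s).le ((hPt b).1 u).le) ((hPx b).1 x).le
  · exact gibbs_ineq _ _ (fun y => (hPyx b x).1 y) (fun y => (hQ s u x).1 y)
      (hPyx b x).2 (hQ s u x).2

/-- Bayes optimality of the mixture predictor: the prior-averaged regret of any
predictor is at least the conditional mutual information. -/
lemma cmi_le_avg_regret (Ps : Θs → S → ℝ) (Pt : Θt → U → ℝ) (Px : Θt → X → ℝ) (Pyx : Θt → X → Y → ℝ)
    (hPs : ∀ θs, (∀ s, 0 < Ps θs s) ∧ ∑ s, Ps θs s = 1)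
    (hPt : ∀ θt, (∀ u, 0 < Pt θt u) ∧ ∑ u, Pt θt u = 1)
    (hPx : ∀ θt, (∀ x, 0 < Px θt x) ∧ ∑ x, Px θt x = 1)
    (hPyx : ∀ θt x, (∀ y, 0 < Pyx θt x y) ∧ ∑ y, Pyx θt x y = 1)
    (ω : Θs → Θt → ℝ) (h0 : ∀ a b, 0 ≤ ω a b)
    (h1 : ∑ a, ∑ b, ω a b = 1) (Q : S → U → X → Y → ℝ)
    (hQ : ∀ s u x, (∀ y, 0 < Q s u x y) ∧ ∑ y, Q s u x y = 1) :
    condMutualInfo Ps Pt Px Pyx ω ≤ ∑ a, ∑ b, ω a b * regret Ps Pt Px Pyx Q a b := by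
  set M := mixturePredictor Ps Pt Px Pyx ω with hM
  have hMpred := mixture_isPredictor Ps Pt Px Pyx hPs hPt hPx hPyx ω h0 h1
  have hden : ∀ s u x, 0 < ∑ θs, ∑ θt, ω θs θt * Ps θs s * Pt θt u * Px θt x :=
    mixDen_pos Ps Pt Px hPs hPt hPx ω h0 h1
  -- difference of regrets for fixed parameters
  have diff : ∀ a b, regret Ps Pt Px Pyx Q a b - regret Ps Pt Px Pyx M a b
      = ∑ s, ∑ u, ∑ x, ∑ y, Ps a s * Pt b u * Px b x *
          (Pyx b x y * Real.log (M s u x y / Q s u x y)) := by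
    intro a b
    unfold regret
    rw [← Finset.sum_sub_distrib]
    refine Finset.sum_congr rfl fun s _ => ?_
    rw [← Finset.sum_sub_distrib]
    refine Finset.sum_congr rfl fun u _ => ?_
    rw [← Finset.sum_sub_distrib]
    refine Finset.sum_congr rfl fun x _ => ?_
    rw [← mul_sub, ← Finset.sum_sub_distrib, Finset.mul_sum]
    refine Finset.sum_congr rfl fun y _ => ?_
    have hlog : Real.log (Pyx b x y / Q s u x y) - Real.log (Pyx b x y / M s u x y)
        = Real.log (M s u x y / Q s u x y) := by
      rw [Real.log_div ((hPyx b x).1 y).ne' ((hQ s u x).1 y).ne',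
          Real.log_div ((hPyx b x).1 y).ne' ((hMpred s u x).1 y).ne',
          Real.log_div ((hMpred s u x).1 y).ne' ((hQ s u x).1 y).ne']
      ring
    rw [← mul_sub, hlog]
  have expand : (∑ a, ∑ b, ω a b * regret Ps Pt Px Pyx Q a b)
      - condMutualInfo Ps Pt Px Pyx ω
      = ∑ a, ∑ b, ω a b *
          (regret Ps Pt Px Pyx Q a b - regret Ps Pt Px Pyx M a b) := by
    unfold condMutualInfo
    rw [← hM, ← Finset.sum_sub_distrib]
    refine Finset.sum_congr rfl fun a _ => ?_
    rw [← Finset.sum_sub_distrib]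
    exact Finset.sum_congr rfl fun b _ => (mul_sub _ _ _).symm
  have key : 0 ≤ ∑ a, ∑ b, ω a b *
      (regret Ps Pt Px Pyx Q a b - regret Ps Pt Px Pyx M a b) := by
    have hswap : ∑ a, ∑ b, ω a b *
        (regret Ps Pt Px Pyx Q a b - regret Ps Pt Px Pyx M a b)
        = ∑ s, ∑ u, ∑ x, ∑ y,
            (∑ a, ∑ b, ω a b * Ps a s * Pt b u * Px b x * Pyx b x y) *
              Real.log (M s u x y / Q s u x y) := by
      calc ∑ a, ∑ b, ω a b *
            (regret Ps Pt Px Pyx Q a b - regret Ps Pt Px Pyx M a b)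
          = ∑ a, ∑ b, ∑ s, ∑ u, ∑ x, ∑ y, ω a b * (Ps a s * Pt b u * Px b x *
              (Pyx b x y * Real.log (M s u x y / Q s u x y))) := by
            refine Finset.sum_congr rfl fun a _ => Finset.sum_congr rfl fun b _ => ?_
            rw [diff a b]
            simp only [Finset.mul_sum]
        _ = ∑ s, ∑ u, ∑ x, ∑ y, ∑ a, ∑ b, ω a b * (Ps a s * Pt b u * Px b x *
              (Pyx b x y * Real.log (M s u x y / Q s u x y))) := sum_swap24 _
        _ = ∑ s, ∑ u, ∑ x, ∑ y,
            (∑ a, ∑ b, ω a b * Ps a s * Pt b u * Px b x * Pyx b x y) *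
              Real.log (M s u x y / Q s u x y) := by
            refine Finset.sum_congr rfl fun s _ => Finset.sum_congr rfl fun u _ =>
              Finset.sum_congr rfl fun x _ => Finset.sum_congr rfl fun y _ => ?_
            rw [Finset.sum_mul]
            refine Finset.sum_congr rfl fun a _ => ?_
            rw [Finset.sum_mul]
            exact Finset.sum_congr rfl fun b _ => by ring
    rw [hswap]
    refine Finset.sum_nonneg fun s _ => Finset.sum_nonneg fun u _ =>
      Finset.sum_nonneg fun x _ => ?_
    have hnum : ∀ y, (∑ a, ∑ b, ω a b * Ps a s * Pt b u * Px b x * Pyx b x y)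
        = (∑ a, ∑ b, ω a b * Ps a s * Pt b u * Px b x) * M s u x y := by
      intro y
      have : M s u x y = (∑ a, ∑ b, ω a b * Ps a s * Pt b u * Px b x * Pyx b x y) /
          (∑ a, ∑ b, ω a b * Ps a s * Pt b u * Px b x) := by rw [hM]; rfl
      rw [this, mul_comm, div_mul_cancel₀ _ (hden s u x).ne']
    calc (0:ℝ) ≤ (∑ a, ∑ b, ω a b * Ps a s * Pt b u * Px b x) *
          ∑ y, M s u x y * Real.log (M s u x y / Q s u x y) :=
        mul_nonneg (hden s u x).le (gibbs_ineq _ _ (fun y => (hMpred s u x).1 y)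
          (fun y => (hQ s u x).1 y) (hMpred s u x).2 (hQ s u x).2)
      _ = ∑ y, (∑ a, ∑ b, ω a b * Ps a s * Pt b u * Px b x * Pyx b x y) *
            Real.log (M s u x y / Q s u x y) := by
          rw [Finset.mul_sum]
          exact Finset.sum_congr rfl fun y _ => by rw [hnum y]; ring
  linarith



lemma avg_le_of_forall_le {Θs Θt : Type*} [Fintype Θs] [Fintype Θt]
    (ω : Θs → Θt → ℝ) (h0 : ∀ a b, 0 ≤ ω a b) (h1 : ∑ a, ∑ b, ω a b = 1)
    (r : Θs → Θt → ℝ) (C : ℝ) (hr : ∀ a b, r a b ≤ C) :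
    ∑ a, ∑ b, ω a b * r a b ≤ C := by
  calc ∑ a, ∑ b, ω a b * r a b ≤ ∑ a, ∑ b, ω a b * C :=
      Finset.sum_le_sum fun a _ => Finset.sum_le_sum fun b _ =>
        mul_le_mul_of_nonneg_left (hr a b) (h0 a b)
    _ = (∑ a, ∑ b, ω a b) * C := by
        rw [Finset.sum_mul]
        exact Finset.sum_congr rfl fun a _ => by rw [Finset.sum_mul]
    _ = C := by rw [h1, one_mul]

lemma sum_delta {α β : Type*} [Fintype α] [Fintype β] [DecidableEq α]
    [DecidableEq β] (a : α) (b : β) (r : α → β → ℝ) :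
    ∑ p, ∑ q, ((if p = a then (1:ℝ) else 0) * (if q = b then 1 else 0)) * r p q
      = r a b := by
  have hq : ∀ p, ∑ q, ((if p = a then (1:ℝ) else 0) * (if q = b then 1 else 0)) * r p q
      = (if p = a then (1:ℝ) else 0) * r p b := by
    intro p
    rw [Finset.sum_eq_single b]
    · by_cases h : p = a <;> simp [h]
    · intro q _ hq; by_cases h : p = a <;> simp [h, hq]
    · intro h; exact absurd (mem_univ b) h
  rw [Finset.sum_congr rfl fun p _ => hq p, Finset.sum_eq_single a]
  · simp
  · intro p _ hp; simp [hp]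
  · intro h; exact absurd (mem_univ a) h

lemma ratio_bound (N D N0 D0 t m : ℝ) (hN : 0 < N) (hD : 0 < D) (hN0 : 0 ≤ N0)
    (hD0 : 0 ≤ D0) (hm : 0 < m) (hmN : m ≤ N) (hN01 : N0 ≤ 1)
    (ht0 : 0 < t) (ht1 : t < 1) :
    ((1-t)*N + t*N0) / ((1-t)*D + t*D0) ≤ (N/D) * (1 + t/((1-t)*m)) := by
  have h1t : (0:ℝ) < 1 - t := by linarith
  have hden1 : (0:ℝ) < (1-t)*D := mul_pos h1t hD
  have hN0N : N0 ≤ N/m := le_trans hN01 ((one_le_div hm).mpr hmN)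
  have hle : ((1-t)*N + t*N0) / ((1-t)*D + t*D0) ≤ ((1-t)*N + t*(N/m)) / ((1-t)*D) := by
    apply div_le_div₀
    · exact add_nonneg (mul_nonneg h1t.le hN.le)
        (mul_nonneg ht0.le (div_nonneg hN.le hm.le))
    · have := mul_le_mul_of_nonneg_left hN0N ht0.le
      linarith
    · exact hden1
    · have := mul_nonneg ht0.le hD0
      linarith
  refine hle.trans (le_of_eq ?_)
  field_simp

lemma perturb_isPrior {Θs Θt : Type*} [Fintype Θs] [Fintype Θt] [DecidableEq Θs]
    [DecidableEq Θt] (ω : Θs → Θt → ℝ) (h0 : ∀ a b, 0 ≤ ω a b)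
    (h1 : ∑ a, ∑ b, ω a b = 1) (a : Θs) (b : Θt) (t : ℝ) (ht0 : 0 ≤ t)
    (ht1 : t ≤ 1) :
    (∀ p q, 0 ≤ (1-t) * ω p q + t * ((if p = a then (1:ℝ) else 0) * (if q = b then 1 else 0))) ∧
      ∑ p, ∑ q, ((1-t) * ω p q + t * ((if p = a then (1:ℝ) else 0) * (if q = b then 1 else 0))) = 1 := by
  constructor
  · intro p q
    refine add_nonneg (mul_nonneg (by linarith) (h0 p q)) (mul_nonneg ht0 ?_)
    by_cases hp : p = a <;> by_cases hq : q = b <;> simp [hp, hq]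
  · have hδ : ∑ p, ∑ q, ((if p = a then (1:ℝ) else 0) * (if q = b then 1 else 0)) = 1 := by
      have := sum_delta a b (fun _ _ => (1:ℝ))
      simpa using this
    simp only [Finset.sum_add_distrib, ← Finset.mul_sum]
    rw [h1]
    simp only [Finset.sum_ite_eq', Finset.mem_univ, if_true, mul_one]
    ring

lemma perturb_bound [DecidableEq Θs] [DecidableEq Θt]
    (Ps : Θs → S → ℝ) (Pt : Θt → U → ℝ) (Px : Θt → X → ℝ) (Pyx : Θt → X → Y → ℝ)
    (hPs : ∀ θs, (∀ s, 0 < Ps θs s) ∧ ∑ s, Ps θs s = 1)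
    (hPt : ∀ θt, (∀ u, 0 < Pt θt u) ∧ ∑ u, Pt θt u = 1)
    (hPx : ∀ θt, (∀ x, 0 < Px θt x) ∧ ∑ x, Px θt x = 1)
    (hPyx : ∀ θt x, (∀ y, 0 < Pyx θt x y) ∧ ∑ y, Pyx θt x y = 1)
    (ω : Θs → Θt → ℝ) (h0 : ∀ a b, 0 ≤ ω a b) (h1 : ∑ a, ∑ b, ω a b = 1)
    (a : Θs) (b : Θt) (t m : ℝ) (hm : 0 < m)
    (hmle : ∀ (p : Θs) (q : Θt) (s : S) (u : U) (x : X) (y : Y),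
      m ≤ Ps p s * Pt q u * Px q x * Pyx q x y)
    (ht0 : 0 < t) (ht2 : t ≤ 1/2) :
    (1 - t) * condMutualInfo Ps Pt Px Pyx ω
      + t * (regret Ps Pt Px Pyx (mixturePredictor Ps Pt Px Pyx ω) a b - 2*t/m)
    ≤ condMutualInfo Ps Pt Px Pyx
        (fun p q => (1-t) * ω p q + t * ((if p = a then (1:ℝ) else 0) * (if q = b then 1 else 0))) := by
  have h1t : (0:ℝ) < 1 - t := by linarith
  set ω' : Θs → Θt → ℝ := fun p q => (1-t) * ω p q +
    t * ((if p = a then (1:ℝ) else 0) * (if q = b then 1 else 0)) with hω'def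
  obtain ⟨hω'0, hω'1⟩ := perturb_isPrior ω h0 h1 a b t ht0.le (by linarith)
  have hω'0 : ∀ p q, 0 ≤ ω' p q := hω'0
  have hω'1 : ∑ p, ∑ q, ω' p q = 1 := hω'1
  set M : S → U → X → Y → ℝ := mixturePredictor Ps Pt Px Pyx ω with hMdef
  set M' : S → U → X → Y → ℝ := mixturePredictor Ps Pt Px Pyx ω' with hM'def
  have hMpred := mixture_isPredictor Ps Pt Px Pyx hPs hPt hPx hPyx ω h0 h1
  have hM'pred := mixture_isPredictor Ps Pt Px Pyx hPs hPt hPx hPyx ω' hω'0 hω'1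
  have hden := mixDen_pos Ps Pt Px hPs hPt hPx ω h0 h1
  have hnum := mixNum_pos Ps Pt Px Pyx hPs hPt hPx hPyx ω h0 h1
  -- numerator and denominator of the perturbed mixture
  have hNum' : ∀ s u x y, (∑ p, ∑ q, ω' p q * Ps p s * Pt q u * Px q x * Pyx q x y)
      = (1-t) * (∑ p, ∑ q, ω p q * Ps p s * Pt q u * Px q x * Pyx q x y)
        + t * (Ps a s * Pt b u * Px b x * Pyx b x y) := by
    intro s u x y
    have step : ∀ p q, ω' p q * Ps p s * Pt q u * Px q x * Pyx q x y
        = (1-t) * (ω p q * Ps p s * Pt q u * Px q x * Pyx q x y)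
          + t * (((if p = a then (1:ℝ) else 0) * (if q = b then 1 else 0)) *
            (Ps p s * Pt q u * Px q x * Pyx q x y)) := by
      intro p q; rw [hω'def]; ring
    rw [Finset.sum_congr rfl fun p _ => Finset.sum_congr rfl fun q _ => step p q]
    simp only [Finset.sum_add_distrib, ← Finset.mul_sum]
    rw [sum_delta a b (fun p q => Ps p s * Pt q u * Px q x * Pyx q x y)]
  have hDen' : ∀ s u x, (∑ p, ∑ q, ω' p q * Ps p s * Pt q u * Px q x)
      = (1-t) * (∑ p, ∑ q, ω p q * Ps p s * Pt q u * Px q x)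
        + t * (Ps a s * Pt b u * Px b x) := by
    intro s u x
    have step : ∀ p q, ω' p q * Ps p s * Pt q u * Px q x
        = (1-t) * (ω p q * Ps p s * Pt q u * Px q x)
          + t * (((if p = a then (1:ℝ) else 0) * (if q = b then 1 else 0)) *
            (Ps p s * Pt q u * Px q x)) := by
      intro p q; rw [hω'def]; ring
    rw [Finset.sum_congr rfl fun p _ => Finset.sum_congr rfl fun q _ => step p q]
    simp only [Finset.sum_add_distrib, ← Finset.mul_sum]
    rw [sum_delta a b (fun p q => Ps p s * Pt q u * Px q x)]
  -- lower bound for the numerator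
  have hNge : ∀ s u x y, m ≤ ∑ p, ∑ q, ω p q * Ps p s * Pt q u * Px q x * Pyx q x y := by
    intro s u x y
    calc m = (∑ p, ∑ q, ω p q) * m := by rw [h1, one_mul]
      _ = ∑ p, ∑ q, ω p q * m := by
          rw [Finset.sum_mul]
          exact Finset.sum_congr rfl fun p _ => by rw [Finset.sum_mul]
      _ ≤ ∑ p, ∑ q, ω p q * Ps p s * Pt q u * Px q x * Pyx q x y := by
          refine Finset.sum_le_sum fun p _ => Finset.sum_le_sum fun q _ => ?_
          calc ω p q * m ≤ ω p q * (Ps p s * Pt q u * Px q x * Pyx q x y) :=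
              mul_le_mul_of_nonneg_left (hmle p q s u x y) (h0 p q)
            _ = ω p q * Ps p s * Pt q u * Px q x * Pyx q x y := by ring
  have hfac1 : ∀ (c : Θs) s, Ps c s ≤ 1 := fun c s => by
    calc Ps c s ≤ ∑ s', Ps c s' :=
        Finset.single_le_sum (fun i _ => ((hPs c).1 i).le) (mem_univ s)
      _ = 1 := (hPs c).2
  have hfac2 : ∀ (c : Θt) u, Pt c u ≤ 1 := fun c u => by
    calc Pt c u ≤ ∑ u', Pt c u' :=
        Finset.single_le_sum (fun i _ => ((hPt c).1 i).le) (mem_univ u)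
      _ = 1 := (hPt c).2
  have hfac3 : ∀ (c : Θt) x, Px c x ≤ 1 := fun c x => by
    calc Px c x ≤ ∑ x', Px c x' :=
        Finset.single_le_sum (fun i _ => ((hPx c).1 i).le) (mem_univ x)
      _ = 1 := (hPx c).2
  have hfac4 : ∀ (c : Θt) x y, Pyx c x y ≤ 1 := fun c x y => by
    calc Pyx c x y ≤ ∑ y', Pyx c x y' :=
        Finset.single_le_sum (fun i _ => ((hPyx c x).1 i).le) (mem_univ y)
      _ = 1 := (hPyx c x).2
  -- pointwise bound on the perturbed mixture
  have hMM' : ∀ s u x y, M' s u x y ≤ M s u x y * (1 + t/((1-t)*m)) := by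
    intro s u x y
    have hM'eq : M' s u x y
        = ((1-t) * (∑ p, ∑ q, ω p q * Ps p s * Pt q u * Px q x * Pyx q x y)
            + t * (Ps a s * Pt b u * Px b x * Pyx b x y))
          / ((1-t) * (∑ p, ∑ q, ω p q * Ps p s * Pt q u * Px q x)
            + t * (Ps a s * Pt b u * Px b x)) := by
      rw [hM'def]
      show (∑ p, ∑ q, ω' p q * Ps p s * Pt q u * Px q x * Pyx q x y)
          / (∑ p, ∑ q, ω' p q * Ps p s * Pt q u * Px q x) = _
      rw [hNum' s u x y, hDen' s u x]
    have hMeq : M s u x y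
        = (∑ p, ∑ q, ω p q * Ps p s * Pt q u * Px q x * Pyx q x y)
          / (∑ p, ∑ q, ω p q * Ps p s * Pt q u * Px q x) := rfl
    rw [hM'eq, hMeq]
    apply ratio_bound
    · exact hnum s u x y
    · exact hden s u x
    · exact (mul_pos (mul_pos (mul_pos ((hPs a).1 s) ((hPt b).1 u)) ((hPx b).1 x))
        ((hPyx b x).1 y)).le
    · exact (mul_pos (mul_pos ((hPs a).1 s) ((hPt b).1 u)) ((hPx b).1 x)).le
    · exact hm
    · exact hNge s u x y
    · exact mul_le_one₀ (mul_le_one₀ (mul_le_one₀ (hfac1 a s)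
        ((hPt b).1 u).le (hfac2 b u)) ((hPx b).1 x).le (hfac3 b x))
        ((hPyx b x).1 y).le (hfac4 b x y)
    · exact ht0
    · linarith
  -- log bound
  have hlogM' : ∀ s u x y, Real.log (M' s u x y) ≤ Real.log (M s u x y) + 2*t/m := by
    intro s u x y
    have hcpos : (0:ℝ) < 1 + t/((1-t)*m) := by
      have := div_nonneg ht0.le (mul_nonneg h1t.le hm.le)
      linarith
    have hc' : t/((1-t)*m) ≤ 2*t/m := by
      rw [div_le_div_iff₀ (mul_pos h1t hm) hm]
      nlinarith [mul_nonneg (mul_nonneg ht0.le hm.le) (by linarith : (0:ℝ) ≤ 1 - 2*t)]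
    calc Real.log (M' s u x y) ≤ Real.log (M s u x y * (1 + t/((1-t)*m))) :=
        Real.log_le_log ((hM'pred s u x).1 y) (hMM' s u x y)
      _ = Real.log (M s u x y) + Real.log (1 + t/((1-t)*m)) :=
        Real.log_mul ((hMpred s u x).1 y).ne' hcpos.ne'
      _ ≤ Real.log (M s u x y) + 2*t/m := by
        have := Real.log_le_sub_one_of_pos hcpos
        linarith
  -- regret comparison
  have hregret : regret Ps Pt Px Pyx M a b - 2*t/m ≤ regret Ps Pt Px Pyx M' a b := by
    have hw1 : ∑ s, ∑ u, ∑ x, Ps a s * Pt b u * Px b x = 1 := by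
      have e1 : ∀ (s : S) (u : U), ∑ x, Ps a s * Pt b u * Px b x = Ps a s * Pt b u := by
        intro s u; rw [← Finset.mul_sum, (hPx b).2, mul_one]
      have e2 : ∀ (s : S), ∑ u, Ps a s * Pt b u = Ps a s := by
        intro s; rw [← Finset.mul_sum, (hPt b).2, mul_one]
      simp only [e1, e2]
      exact (hPs a).2
    have hsplit : regret Ps Pt Px Pyx M a b - 2*t/m
        = ∑ s, ∑ u, ∑ x, Ps a s * Pt b u * Px b x *
            ((∑ y, Pyx b x y * Real.log (Pyx b x y / M s u x y)) - 2*t/m) := by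
      simp only [mul_sub, Finset.sum_sub_distrib]
      unfold regret
      congr 1
      symm
      calc ∑ s, ∑ u, ∑ x, Ps a s * Pt b u * Px b x * (2*t/m)
          = (∑ s, ∑ u, ∑ x, Ps a s * Pt b u * Px b x) * (2*t/m) := by
            simp only [← Finset.sum_mul]
        _ = 2*t/m := by rw [hw1, one_mul]
    rw [hsplit]
    unfold regret
    refine Finset.sum_le_sum fun s _ => Finset.sum_le_sum fun u _ =>
      Finset.sum_le_sum fun x _ => ?_
    refine mul_le_mul_of_nonneg_left ?_
      (mul_nonneg (mul_nonneg ((hPs a).1 s).le ((hPt b).1 u).le) ((hPx b).1 x).le)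
    have hinner : (∑ y, Pyx b x y * Real.log (Pyx b x y / M s u x y)) - 2*t/m
        = ∑ y, Pyx b x y * (Real.log (Pyx b x y / M s u x y) - 2*t/m) := by
      simp only [mul_sub, Finset.sum_sub_distrib, ← Finset.sum_mul]
      rw [(hPyx b x).2, one_mul]
    rw [hinner]
    refine Finset.sum_le_sum fun y _ => ?_
    refine mul_le_mul_of_nonneg_left ?_ ((hPyx b x).1 y).le
    rw [Real.log_div ((hPyx b x).1 y).ne' ((hMpred s u x).1 y).ne',
        Real.log_div ((hPyx b x).1 y).ne' ((hM'pred s u x).1 y).ne']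
    have := hlogM' s u x y
    linarith
  -- expansion of the perturbed CMI
  have expand' : condMutualInfo Ps Pt Px Pyx ω'
      = (1-t) * (∑ p, ∑ q, ω p q * regret Ps Pt Px Pyx M' p q)
        + t * regret Ps Pt Px Pyx M' a b := by
    unfold condMutualInfo
    rw [← hM'def]
    have step : ∀ p q, ω' p q * regret Ps Pt Px Pyx M' p q
        = (1-t) * (ω p q * regret Ps Pt Px Pyx M' p q)
          + t * (((if p = a then (1:ℝ) else 0) * (if q = b then 1 else 0)) *
            regret Ps Pt Px Pyx M' p q) := by
      intro p q; rw [hω'def]; ring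
    rw [Finset.sum_congr rfl fun p _ => Finset.sum_congr rfl fun q _ => step p q]
    simp only [Finset.sum_add_distrib, ← Finset.mul_sum]
    rw [sum_delta a b (fun p q => regret Ps Pt Px Pyx M' p q)]
  have hB : condMutualInfo Ps Pt Px Pyx ω
      ≤ ∑ p, ∑ q, ω p q * regret Ps Pt Px Pyx M' p q :=
    cmi_le_avg_regret Ps Pt Px Pyx hPs hPt hPx hPyx ω h0 h1 M' hM'pred
  calc (1 - t) * condMutualInfo Ps Pt Px Pyx ω
      + t * (regret Ps Pt Px Pyx M a b - 2*t/m)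
      ≤ (1-t) * (∑ p, ∑ q, ω p q * regret Ps Pt Px Pyx M' p q)
        + t * regret Ps Pt Px Pyx M' a b :=
      add_le_add (mul_le_mul_of_nonneg_left hB h1t.le)
        (mul_le_mul_of_nonneg_left hregret ht0.le)
    _ = condMutualInfo Ps Pt Px Pyx ω' := expand'.symm

instance instNonemptyPredictors : Nonempty (Predictors S U X Y) := by
  have hcard : (0:ℝ) < (Fintype.card Y : ℝ) := by
    exact_mod_cast Fintype.card_pos
  refine ⟨⟨fun _ _ _ _ => (Fintype.card Y : ℝ)⁻¹, fun s u x => ⟨fun y => inv_pos.mpr hcard, ?_⟩⟩⟩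
  rw [Finset.sum_const, Finset.card_univ, nsmul_eq_mul, mul_inv_cancel₀ hcard.ne']

instance instNonemptyPriors : Nonempty (Priors Θs Θt) := by
  have hcs : (0:ℝ) < (Fintype.card Θs : ℝ) := by exact_mod_cast Fintype.card_pos
  have hct : (0:ℝ) < (Fintype.card Θt : ℝ) := by exact_mod_cast Fintype.card_pos
  refine ⟨⟨fun _ _ => ((Fintype.card Θs : ℝ) * (Fintype.card Θt : ℝ))⁻¹,
    fun _ _ => (inv_pos.mpr (mul_pos hcs hct)).le, ?_⟩⟩
  simp only [Finset.sum_const, Finset.card_univ, nsmul_eq_mul]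
  field_simp


theorem minimax_regret_eq_max_cmi
    (Ps : Θs → S → ℝ) (Pt : Θt → U → ℝ) (Px : Θt → X → ℝ) (Pyx : Θt → X → Y → ℝ)
    (hPs : ∀ θs, (∀ s, 0 < Ps θs s) ∧ ∑ s, Ps θs s = 1)
    (hPt : ∀ θt, (∀ u, 0 < Pt θt u) ∧ ∑ u, Pt θt u = 1)
    (hPx : ∀ θt, (∀ x, 0 < Px θt x) ∧ ∑ x, Px θt x = 1)
    (hPyx : ∀ θt x, (∀ y, 0 < Pyx θt x y) ∧ ∑ y, Pyx θt x y = 1) :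
    (⨅ Q : Predictors S U X Y, ⨆ θ : Θs × Θt,
        regret Ps Pt Px Pyx Q.1 θ.1 θ.2) =
      ⨆ ω : Priors Θs Θt, condMutualInfo Ps Pt Px Pyx ω.1 := by
  classical
  -- the easy ("max ≤ min") bound, used in both directions
  have hub : ∀ (Q : Predictors S U X Y) (ω : Θs → Θt → ℝ),
      (∀ p q, 0 ≤ ω p q) → (∑ p, ∑ q, ω p q = 1) →
      condMutualInfo Ps Pt Px Pyx ω ≤ ⨆ θ : Θs × Θt, regret Ps Pt Px Pyx Q.1 θ.1 θ.2 := by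
    intro Q ω h0 h1
    calc condMutualInfo Ps Pt Px Pyx ω
        ≤ ∑ p, ∑ q, ω p q * regret Ps Pt Px Pyx Q.1 p q :=
        cmi_le_avg_regret Ps Pt Px Pyx hPs hPt hPx hPyx ω h0 h1 Q.1 Q.2
      _ ≤ ⨆ θ : Θs × Θt, regret Ps Pt Px Pyx Q.1 θ.1 θ.2 :=
        avg_le_of_forall_le ω h0 h1 _ _ fun p q =>
          le_ciSup (f := fun θ : Θs × Θt => regret Ps Pt Px Pyx Q.1 θ.1 θ.2)
            (Finite.bddAbove_range _) (p, q)
  obtain ⟨Q0⟩ := (inferInstance : Nonempty (Predictors S U X Y))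
  have hbdd : BddAbove (Set.range fun ω : Priors Θs Θt =>
      condMutualInfo Ps Pt Px Pyx ω.1) := by
    refine ⟨⨆ θ : Θs × Θt, regret Ps Pt Px Pyx Q0.1 θ.1 θ.2, ?_⟩
    rintro _ ⟨ω, rfl⟩
    exact hub Q0 ω.1 ω.2.1 ω.2.2
  have hbddBelow : BddBelow (Set.range fun Q : Predictors S U X Y =>
      ⨆ θ : Θs × Θt, regret Ps Pt Px Pyx Q.1 θ.1 θ.2) := by
    refine ⟨0, ?_⟩
    rintro _ ⟨Q, rfl⟩
    obtain ⟨θ0⟩ := (inferInstance : Nonempty (Θs × Θt))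
    exact le_ciSup_of_le (Finite.bddAbove_range _) θ0
      (regret_nonneg Ps Pt Px Pyx hPs hPt hPx hPyx Q.1 Q.2 θ0.1 θ0.2)
  apply le_antisymm
  · -- minimax ≤ maximin
    refine le_of_forall_pos_le_add fun ε hε => ?_
    set K := ⨆ ω : Priors Θs Θt, condMutualInfo Ps Pt Px Pyx ω.1 with hK
    -- uniform positive lower bound on the model probabilities
    obtain ⟨p0, -, hp0⟩ := Finset.exists_min_image (univ : Finset (Θs × Θt × S × U × X × Y))
      (fun p => Ps p.1 p.2.2.1 * Pt p.2.1 p.2.2.2.1 * Px p.2.1 p.2.2.2.2.1 *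
        Pyx p.2.1 p.2.2.2.2.1 p.2.2.2.2.2) univ_nonempty
    set m : ℝ := Ps p0.1 p0.2.2.1 * Pt p0.2.1 p0.2.2.2.1 * Px p0.2.1 p0.2.2.2.2.1 *
      Pyx p0.2.1 p0.2.2.2.2.1 p0.2.2.2.2.2 with hmdef
    have hm0 : 0 < m := by
      rw [hmdef]
      exact mul_pos (mul_pos (mul_pos ((hPs _).1 _) ((hPt _).1 _)) ((hPx _).1 _))
        ((hPyx _ _).1 _)
    have hmle : ∀ (p : Θs) (q : Θt) (s : S) (u : U) (x : X) (y : Y),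
        m ≤ Ps p s * Pt q u * Px q x * Pyx q x y :=
      fun p q s u x y => hp0 (p, q, s, u, x, y) (mem_univ _)
    set t : ℝ := min (1/2 : ℝ) (ε * m / 4) with htdef
    have ht0 : 0 < t := lt_min (by norm_num) (by positivity)
    have ht2 : t ≤ 1/2 := min_le_left _ _
    have hte : 2*t/m ≤ ε/2 := by
      have h4 : t ≤ ε * m / 4 := min_le_right _ _
      rw [div_le_div_iff₀ hm0 (by norm_num : (0:ℝ) < 2)]
      nlinarith
    have h1t : (0:ℝ) < 1 - t := by linarith
    -- a near-maximizing prior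
    have hlt : K - t*ε/2 < ⨆ ω : Priors Θs Θt, condMutualInfo Ps Pt Px Pyx ω.1 := by
      rw [← hK]
      nlinarith
    obtain ⟨ω, hω⟩ := exists_lt_of_lt_ciSup hlt
    set M : S → U → X → Y → ℝ := mixturePredictor Ps Pt Px Pyx ω.1 with hMdef
    have hMpred := mixture_isPredictor Ps Pt Px Pyx hPs hPt hPx hPyx ω.1 ω.2.1 ω.2.2
    have hQstar : (⨆ θ : Θs × Θt, regret Ps Pt Px Pyx M θ.1 θ.2) ≤ K + ε := by
      refine ciSup_le fun θ => ?_
      have hkey := perturb_bound Ps Pt Px Pyx hPs hPt hPx hPyx ω.1 ω.2.1 ω.2.2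
        θ.1 θ.2 t m hm0 hmle ht0 ht2
      obtain ⟨hω'0, hω'1⟩ := perturb_isPrior ω.1 ω.2.1 ω.2.2 θ.1 θ.2 t ht0.le
        (by linarith)
      have hK' : condMutualInfo Ps Pt Px Pyx
          (fun p q => (1-t) * ω.1 p q +
            t * ((if p = θ.1 then (1:ℝ) else 0) * (if q = θ.2 then 1 else 0))) ≤ K := by
        rw [hK]
        exact le_ciSup hbdd (⟨fun p q => (1-t) * ω.1 p q +
          t * ((if p = θ.1 then (1:ℝ) else 0) * (if q = θ.2 then 1 else 0)),
          hω'0, hω'1⟩ : Priors Θs Θt)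
      set R := regret Ps Pt Px Pyx M θ.1 θ.2 with hRdef
      set C := condMutualInfo Ps Pt Px Pyx ω.1 with hCdef
      have h1 : (1-t) * (K - t*ε/2) + t * (R - 2*t/m) ≤ K := by
        have := mul_le_mul_of_nonneg_left hω.le h1t.le
        linarith [hkey.trans hK']
      have h3 : R ≤ K + (1-t)*(ε/2) + 2*t/m := by
        by_contra hcon
        push_neg at hcon
        have h2 : t * (K + (1-t)*(ε/2) + 2*t/m) < t * R :=
          mul_lt_mul_of_pos_left hcon ht0
        nlinarith
      have h4 : (1-t)*(ε/2) ≤ ε/2 := by nlinarith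
      linarith
    calc (⨅ Q : Predictors S U X Y, ⨆ θ : Θs × Θt, regret Ps Pt Px Pyx Q.1 θ.1 θ.2)
        ≤ ⨆ θ : Θs × Θt, regret Ps Pt Px Pyx M θ.1 θ.2 := by
          exact ciInf_le hbddBelow (⟨M, hMpred⟩ : Predictors S U X Y)
      _ ≤ K + ε := hQstar
  · -- maximin ≤ minimax
    refine le_ciInf fun Q => ciSup_le fun ω => hub Q ω.1 ω.2.1 ω.2.2
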